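/- Let w = vσ_j ∈ L_n with v ∈ A_n^* and 1 ≤ j ≤ n−1. Then v ∈ L_n, and F_n^min(w) equals the set of ≼-minimal elements of the set {σ_1,…,σ_{j−2}, σ_{j−1}σ_j} ∪ {γ ∈ B_n^+ : there exists β ∈ F_n^min(v) such that σ_j·γ is a least common right-multiple of σ_j and β} (with the convention that terms involving indices less than 1 are omitted). -/

import Mathlib

/-!
Common setup: the positive braid monoid `B_n^+` on `n` strands, presented by the
Artin generators `σ_1, …, σ_{n-1}` (1-based indexing) with the braid relations;
lex-representatives, forbidden prefixes, admissible functions, etc.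
-/

namespace BraidPaper

/-- Words in the Artin generators: the free monoid on `n - 1` letters. -/
abbrev Word (n : ℕ) := FreeMonoid (Fin (n - 1))

/-- The generator `σ_i` (`1 ≤ i ≤ n - 1`, 1-based) as a one-letter word;
the empty word for out-of-range indices. -/
def sigma (n : ℕ) (i : ℕ) : Word n :=
  if h : 1 ≤ i ∧ i ≤ n - 1 then FreeMonoid.of (⟨i - 1, by omega⟩ : Fin (n - 1)) else 1

/-- The braid relations. -/
inductive BraidRel (n : ℕ) : Word n → Word n → Prop
  | comm : ∀ i j : ℕ, 1 ≤ i → i ≤ n - 1 → 1 ≤ j → j ≤ n - 1 → (i + 2 ≤ j ∨ j + 2 ≤ i) →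
      BraidRel n (sigma n i * sigma n j) (sigma n j * sigma n i)
  | braid : ∀ i : ℕ, 1 ≤ i → i + 1 ≤ n - 1 →
      BraidRel n (sigma n i * sigma n (i + 1) * sigma n i)
        (sigma n (i + 1) * sigma n i * sigma n (i + 1))

/-- The congruence generated by the braid relations. -/
def braidCon (n : ℕ) : Con (Word n) := conGen (BraidRel n)

/-- The positive braid monoid `B_n^+`. -/
abbrev PB (n : ℕ) := (braidCon n).Quotient

/-- The canonical projection `b : A_n^* → B_n^+`. -/
def pr (n : ℕ) : Word n →* PB n := (braidCon n).mk'

/-- The length homomorphism on words (with values in `Multiplicative ℕ`). -/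
def lenHom (n : ℕ) : Word n →* Multiplicative ℕ :=
  FreeMonoid.lift fun _ => Multiplicative.ofAdd 1

lemma lenHom_sigma (n t : ℕ) (h1 : 1 ≤ t) (h2 : t ≤ n - 1) :
    lenHom n (sigma n t) = Multiplicative.ofAdd 1 := by
  rw [sigma, dif_pos ⟨h1, h2⟩]
  exact FreeMonoid.lift_eval_of _ _

lemma braidCon_le_ker (n : ℕ) : braidCon n ≤ Con.ker (lenHom n) := by
  refine Con.conGen_le.2 ?_
  intro x y h
  rw [Con.ker_rel]
  cases h with
  | comm i j hi hi' hj hj' hij =>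
      rw [map_mul, map_mul, mul_comm]
  | braid i hi hi' =>
      rw [map_mul, map_mul, map_mul, map_mul,
        lenHom_sigma n i hi (by omega), lenHom_sigma n (i + 1) (by omega) hi']

/-- The (well-defined) length of a positive braid. -/
def len (n : ℕ) (x : PB n) : ℕ :=
  Multiplicative.toAdd (Con.lift _ (lenHom n) (braidCon_le_ker n) x)

/-- The length of a word. -/
def wlen {n : ℕ} (w : Word n) : ℕ := (FreeMonoid.toList w).length

/-- Strict lexicographic order on words, induced by `σ_1 < σ_2 < ⋯ < σ_{n-1}`. -/
def lexLt {n : ℕ} (u v : Word n) : Prop :=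
  List.Lex (· < ·) (FreeMonoid.toList u) (FreeMonoid.toList v)

/-- `L_n`: the set of lex-representatives, i.e. words that are `≤_lex`-minimal among
all words representing the same element of `B_n^+` (all of which have equal length). -/
def Ln (n : ℕ) : Set (Word n) :=
  {w | ∀ v : Word n, pr n v = pr n w → ¬ lexLt v w}

open Classical in
/-- `ω(β)`: the lex-representative of a positive braid `β`. -/
noncomputable def omegaRep (n : ℕ) (β : PB n) : Word n :=
  if h : ∃ w : Word n, pr n w = β ∧ w ∈ Ln n then h.choose else 1

/-- `F_n(w)`: the set of forbidden prefixes after `w`. -/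
def Fset (n : ℕ) (w : Word n) : Set (PB n) :=
  {α | w * omegaRep n α ∉ Ln n}

/-- Left-divisibility `a ≼ b` in `B_n^+`. -/
def ldvd (n : ℕ) (a b : PB n) : Prop := ∃ c : PB n, a * c = b

/-- The set of `≼`-minimal elements of a subset of `B_n^+`. -/
def minimals (n : ℕ) (S : Set (PB n)) : Set (PB n) :=
  {a | a ∈ S ∧ ∀ b ∈ S, ldvd n b a → b = a}

/-- `F_n^min(w)`: the set of minimal forbidden prefixes after `w`. -/
def Fmin (n : ℕ) (w : Word n) : Set (PB n) := minimals n (Fset n w)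

/-- `d` is a least common right-multiple of the set `S`. -/
def IsLcm (n : ℕ) (S : Set (PB n)) (d : PB n) : Prop :=
  (∀ a ∈ S, ldvd n a d) ∧ ∀ e : PB n, (∀ a ∈ S, ldvd n a e) → ldvd n d e

/-- The descending product `σ_a σ_{a-1} ⋯ σ_b` (empty if `b > a`). -/
def prodDesc (n a b : ℕ) : Word n :=
  (((List.range' b (a + 1 - b)).reverse).map (sigma n)).prod

/-- The ascending product `σ_a σ_{a+1} ⋯ σ_b` (empty if `a > b`). -/
def prodAsc (n a b : ℕ) : Word n :=
  ((List.range' a (b + 1 - a)).map (sigma n)).prod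

/-- Admissible functions `f : {1,…,n-1} → {-1,0,1,…,n-1}`. -/
def Admissible (n : ℕ) (f : ℕ → ℤ) : Prop :=
  (∀ i : ℕ, 1 ≤ i → i ≤ n - 1 → -1 ≤ f i ∧ f i ≤ (i : ℤ)) ∧ f 1 ≠ -1

/-- The set `F_f ⊆ B_n^+` associated to an admissible function `f`: the elements
`σ_i σ_{i-1} ⋯ σ_{f(i)}` for `i` with `1 ≤ f(i) ≤ i`, together with the elements
`σ_{i-1} σ_i` for `i` with `f(i) = -1`. -/
def Ff (n : ℕ) (f : ℕ → ℤ) : Set (PB n) :=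
  {x | ∃ i : ℕ, 1 ≤ i ∧ i ≤ n - 1 ∧ 1 ≤ f i ∧ f i ≤ (i : ℤ) ∧
        x = pr n (prodDesc n i (f i).toNat)} ∪
  {x | ∃ i : ℕ, 1 ≤ i ∧ i ≤ n - 1 ∧ f i = -1 ∧ x = pr n (sigma n (i - 1) * sigma n i)}

/-- `F_n^min(w, m)`: the set of `≼`-minimal elements of `{σ_1,…,σ_m} ∪ F_n^min(w)`. -/
def FminM (n : ℕ) (w : Word n) (m : ℕ) : Set (PB n) :=
  minimals n ({x | ∃ i : ℕ, 1 ≤ i ∧ i ≤ m ∧ x = pr n (sigma n i)} ∪ Fmin n w)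

/-- `x_{n,j}` (for `j : ℤ`): the number of elements of `B_n^+` of length `j`
(`0` for negative `j`). -/
noncomputable def xcount (n : ℕ) (j : ℤ) : ℕ :=
  Nat.card {x : PB n // (len n x : ℤ) = j}

/-- `x_{n,k}(w,m)`: the number of words in `L_n` of length `k` of the form `w·w'`,
where `w'` does not begin with any of `σ_1, …, σ_m`. -/
noncomputable def xwm (n k : ℕ) (w : Word n) (m : ℕ) : ℕ :=
  Nat.card {v : Word n // wlen v = k ∧ v ∈ Ln n ∧
    ∃ w' : Word n, v = w * w' ∧
      ∀ i : ℕ, 1 ≤ i → i ≤ m → ¬ ∃ u : Word n, w' = sigma n i * u}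

abbrev Ltr (n : ℕ) := Fin (n - 1)

variable {n : ℕ}

/-- `|a - b| ≥ 2`. -/
def far (a b : Ltr n) : Prop := a.1 + 2 ≤ b.1 ∨ b.1 + 2 ≤ a.1

/-- `|a - b| = 1`. -/
def adj (a b : Ltr n) : Prop := a.1 + 1 = b.1 ∨ b.1 + 1 = a.1

lemma far.symm {a b : Ltr n} (h : far a b) : far b a := h.elim Or.inr Or.inl
lemma adj.symm {a b : Ltr n} (h : adj a b) : adj b a := h.elim Or.inr Or.inl

lemma trichotomy (a b : Ltr n) : a = b ∨ far a b ∨ adj a b := by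
  rcases Nat.lt_trichotomy a.1 b.1 with h | h | h
  · rcases Nat.lt_or_ge (a.1 + 1) b.1 with h' | h'
    · exact Or.inr (Or.inl (Or.inl h'))
    · exact Or.inr (Or.inr (Or.inl (by omega)))
  · exact Or.inl (Fin.ext h)
  · rcases Nat.lt_or_ge (b.1 + 1) a.1 with h' | h'
    · exact Or.inr (Or.inl (Or.inr h'))
    · exact Or.inr (Or.inr (Or.inr (by omega)))

lemma far.ne {a b : Ltr n} (h : far a b) : a ≠ b := by
  rintro rfl; rcases h with h | h <;> omega
lemma adj.ne {a b : Ltr n} (h : adj a b) : a ≠ b := by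
  rintro rfl; rcases h with h | h <;> omega
lemma not_far_and_adj {a b : Ltr n} (h : far a b) (h' : adj a b) : False := by
  rcases h with h | h <;> rcases h' with h' | h' <;> omega

/-- One application of a braid relation. -/
inductive Bst (n : ℕ) : List (Ltr n) → List (Ltr n) → Prop
  | comm {a b : Ltr n} : far a b → Bst n [a, b] [b, a]
  | braid {a b : Ltr n} : a.1 + 1 = b.1 → Bst n [a, b, a] [b, a, b]
  | braid' {a b : Ltr n} : a.1 + 1 = b.1 → Bst n [b, a, b] [a, b, a]

lemma Bst.symm {u v : List (Ltr n)} (h : Bst n u v) : Bst n v u := by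
  cases h with
  | comm h => exact Bst.comm h.symm
  | braid h => exact Bst.braid' h
  | braid' h => exact Bst.braid h

lemma Bst.length_eq {u v : List (Ltr n)} (h : Bst n u v) : u.length = v.length := by
  cases h <;> rfl

/-- One rewriting step somewhere inside a word. -/
def Step (n : ℕ) (u v : List (Ltr n)) : Prop :=
  ∃ p x y s, Bst n x y ∧ u = p ++ x ++ s ∧ v = p ++ y ++ s

lemma Step.symm {u v : List (Ltr n)} (h : Step n u v) : Step n v u := by
  obtain ⟨p, x, y, s, hb, hu, hv⟩ := h
  exact ⟨p, y, x, s, hb.symm, hv, hu⟩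

lemma Step.length_eq {u v : List (Ltr n)} (h : Step n u v) : u.length = v.length := by
  obtain ⟨p, x, y, s, hb, rfl, rfl⟩ := h
  simp [hb.length_eq]

/-- Equivalence of words modulo the braid relations. -/
def Eqv (n : ℕ) : List (Ltr n) → List (Ltr n) → Prop := Relation.ReflTransGen (Step n)

lemma Eqv.refl (u : List (Ltr n)) : Eqv n u u := Relation.ReflTransGen.refl

lemma Eqv.trans {u v w : List (Ltr n)} (h : Eqv n u v) (h' : Eqv n v w) : Eqv n u w :=
  Relation.ReflTransGen.trans h h'

lemma Eqv.symm {u v : List (Ltr n)} (h : Eqv n u v) : Eqv n v u := by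
  induction h with
  | refl => exact Eqv.refl u
  | tail _ h2 ih => exact Relation.ReflTransGen.trans (Relation.ReflTransGen.single h2.symm) ih

lemma Eqv.single {u v : List (Ltr n)} (h : Step n u v) : Eqv n u v :=
  Relation.ReflTransGen.single h

lemma Eqv.length_eq {u v : List (Ltr n)} (h : Eqv n u v) : u.length = v.length := by
  induction h with
  | refl => rfl
  | tail _ h2 ih => exact ih.trans h2.length_eq

lemma Step.append {u v p s : List (Ltr n)} (h : Step n u v) :
    Step n (p ++ u ++ s) (p ++ v ++ s) := by
  obtain ⟨p', x, y, s', hb, rfl, rfl⟩ := h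
  exact ⟨p ++ p', x, y, s' ++ s, hb, by simp, by simp⟩

lemma Eqv.append {u v p s : List (Ltr n)} (h : Eqv n u v) :
    Eqv n (p ++ u ++ s) (p ++ v ++ s) := by
  induction h with
  | refl => exact Eqv.refl _
  | tail _ h2 ih => exact ih.trans (Eqv.single h2.append)

lemma Eqv.cons (x : Ltr n) {u v : List (Ltr n)} (h : Eqv n u v) : Eqv n (x :: u) (x :: v) := by
  have := h.append (p := [x]) (s := [])
  simpa using this

lemma Eqv.append_right {u v : List (Ltr n)} (s : List (Ltr n)) (h : Eqv n u v) :
    Eqv n (u ++ s) (v ++ s) := by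
  have := h.append (p := []) (s := s); simpa using this

lemma eqv_swap {a b : Ltr n} (h : far a b) (t : List (Ltr n)) :
    Eqv n (a :: b :: t) (b :: a :: t) :=
  Eqv.single ⟨[], [a, b], [b, a], t, Bst.comm h, rfl, rfl⟩

lemma eqv_braid {a b : Ltr n} (h : adj a b) (t : List (Ltr n)) :
    Eqv n (a :: b :: a :: t) (b :: a :: b :: t) := by
  rcases h with h | h
  · exact Eqv.single ⟨[], [a, b, a], [b, a, b], t, Bst.braid h, rfl, rfl⟩
  · exact Eqv.single ⟨[], [a, b, a], [b, a, b], t, Bst.braid' h, rfl, rfl⟩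

/-- Words equivalent in exactly `k` steps. -/
inductive Chain (n : ℕ) : ℕ → List (Ltr n) → List (Ltr n) → Prop
  | zero (u : List (Ltr n)) : Chain n 0 u u
  | succ {k : ℕ} {u w v : List (Ltr n)} : Step n u w → Chain n k w v → Chain n (k + 1) u v

lemma Chain.snoc {k : ℕ} {u v w : List (Ltr n)} (h : Chain n k u v) (h' : Step n v w) :
    Chain n (k + 1) u w := by
  induction h with
  | zero u => exact Chain.succ h' (Chain.zero _)
  | succ hs _ ih => exact Chain.succ hs (ih h')

lemma eqv_iff_chain {u v : List (Ltr n)} : Eqv n u v ↔ ∃ k, Chain n k u v := by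
  constructor
  · intro h
    induction h with
    | refl => exact ⟨0, Chain.zero u⟩
    | tail h1 h2 ih =>
      obtain ⟨k, hk⟩ := ih
      exact ⟨k + 1, hk.snoc h2⟩
  · rintro ⟨k, hk⟩
    induction hk with
    | zero u => exact Eqv.refl u
    | succ hs _ ih => exact (Eqv.single hs).trans ih

lemma Chain.length_eq {k : ℕ} {u v : List (Ltr n)} (h : Chain n k u v) :
    u.length = v.length := (eqv_iff_chain.mpr ⟨k, h⟩).length_eq


/-! ### The key lemma (Garside / Kassel–Turaev) -/

/-- The conclusion of the key lemma. -/
def KC (n : ℕ) (u v : List (Ltr n)) (a b : Ltr n) : Prop :=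
  (a = b → Eqv n u v) ∧
  (far a b → ∃ C, Eqv n u (b :: C) ∧ Eqv n v (a :: C)) ∧
  (adj a b → ∃ C, Eqv n u (b :: a :: C) ∧ Eqv n v (a :: b :: C))

lemma kc_of_eq {u v : List (Ltr n)} {a b : Ltr n} (h : a = b) (he : Eqv n u v) :
    KC n u v a b :=
  ⟨fun _ => he, fun hf => absurd h hf.ne, fun ha => absurd h ha.ne⟩

lemma kc_far {u v : List (Ltr n)} {a b : Ltr n} (h : far a b) (C : List (Ltr n))
    (h1 : Eqv n u (b :: C)) (h2 : Eqv n v (a :: C)) : KC n u v a b :=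
  ⟨fun he => absurd he h.ne, fun _ => ⟨C, h1, h2⟩, fun ha => (not_far_and_adj h ha).elim⟩

lemma kc_adj {u v : List (Ltr n)} {a b : Ltr n} (h : adj a b) (C : List (Ltr n))
    (h1 : Eqv n u (b :: a :: C)) (h2 : Eqv n v (a :: b :: C)) : KC n u v a b :=
  ⟨fun he => absurd he h.ne, fun hf => (not_far_and_adj hf h).elim, fun _ => ⟨C, h1, h2⟩⟩

lemma step_two_le {u v : List (Ltr n)} (h : Step n u v) : 2 ≤ u.length := by
  obtain ⟨p, x, y, s, hb, rfl, -⟩ := h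
  cases hb <;> simp <;> omega

lemma chain_short {k : ℕ} {u v : List (Ltr n)} (h : Chain n k u v) (hu : u.length ≤ 1) :
    v = u := by
  induction h with
  | zero u => rfl
  | succ hs _ _ => exact absurd (step_two_le hs) (by omega)

/-- Case analysis for a rewriting step applied to a word with a distinguished head letter. -/
lemma step_cons_cases {a : Ltr n} {u w : List (Ltr n)} (h : Step n (a :: u) w) :
    (∃ u', w = a :: u' ∧ Step n u u') ∨
    (∃ c s, far a c ∧ u = c :: s ∧ w = c :: a :: s) ∨
    (∃ c s, adj a c ∧ u = c :: a :: s ∧ w = c :: a :: c :: s) := by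
  obtain ⟨p, x, y, s, hb, hu, hw⟩ := h
  cases p with
  | cons a' p' =>
    simp only [List.cons_append, List.cons.injEq] at hu hw
    obtain ⟨rfl, hu2⟩ := hu
    exact Or.inl ⟨p' ++ y ++ s, hw, ⟨p', x, y, s, hb, hu2, rfl⟩⟩
  | nil =>
    simp only [List.nil_append] at hu hw
    cases hb with
    | @comm a1 b1 hf =>
      simp only [List.cons_append, List.nil_append, List.cons.injEq] at hu
      obtain ⟨rfl, rfl⟩ := hu
      exact Or.inr (Or.inl ⟨b1, s, hf, rfl, hw⟩)
    | @braid a1 b1 hb1 =>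
      simp only [List.cons_append, List.nil_append, List.cons.injEq] at hu
      obtain ⟨rfl, rfl⟩ := hu
      exact Or.inr (Or.inr ⟨b1, s, Or.inl hb1, rfl, hw⟩)
    | @braid' a1 b1 hb1 =>
      simp only [List.cons_append, List.nil_append, List.cons.injEq] at hu
      obtain ⟨rfl, rfl⟩ := hu
      exact Or.inr (Or.inr ⟨a1, s, Or.inr hb1, rfl, hw⟩)

theorem keyChain : ∀ L k : ℕ, ∀ u v : List (Ltr n), ∀ a b : Ltr n,
    u.length ≤ L → Chain n k (a :: u) (b :: v) → KC n u v a b := by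
  intro L
  induction L with
  | zero =>
    intro k u v a b hL hc
    have hu : u = [] := List.length_eq_zero_iff.mp (by omega)
    subst hu
    have h2 := chain_short hc (by simp)
    simp only [List.cons.injEq] at h2
    obtain ⟨rfl, rfl⟩ := h2
    exact kc_of_eq rfl (Eqv.refl _)
  | succ L ihL =>
    have IHE : ∀ u v : List (Ltr n), ∀ a b : Ltr n, u.length ≤ L →
        Eqv n (a :: u) (b :: v) → KC n u v a b := by
      intro u v a b h he
      obtain ⟨k', hk'⟩ := eqv_iff_chain.mp he
      exact ihL k' u v a b h hk'
    intro k
    induction k with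
    | zero =>
      intro u v a b hL hc
      cases hc
      exact kc_of_eq rfl (Eqv.refl _)
    | succ k ihk =>
      intro u v a b hL hc
      cases hc with
      | succ hs hc' =>
      rcases step_cons_cases hs with ⟨u', rfl, hstep⟩ |
        ⟨c, T, hfac, rfl, rfl⟩ | ⟨c, T, hac, rfl, rfl⟩
      · -- step inside the tail
        have K := ihk u' v a b (by rw [← hstep.length_eq]; exact hL) hc'
        have e0 : Eqv n u u' := Eqv.single hstep
        exact ⟨fun h => e0.trans (K.1 h),
          fun hf => let ⟨C, h1, h2⟩ := K.2.1 hf; ⟨C, e0.trans h1, h2⟩,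
          fun ha => let ⟨C, h1, h2⟩ := K.2.2 ha; ⟨C, e0.trans h1, h2⟩⟩
      · -- head comm step: u = c :: T, far a c
        have K := ihk (a :: T) v c b (by simp only [List.length_cons] at *; omega) hc'
        rcases trichotomy c b with heq | hcb | hcb
        · subst heq
          have hK1 : Eqv n (a :: T) v := K.1 rfl
          rcases trichotomy a c with heq2 | hab | hab
          · exact absurd heq2 hfac.ne
          · exact kc_far hab T (Eqv.refl _) hK1.symm
          · exact (not_far_and_adj hfac hab).elim
        · -- far c b
          obtain ⟨C, hK1, hK2⟩ := K.2.1 hcb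
          rcases trichotomy a b with heq2 | hab | hab
          · subst heq2
            have hTC : Eqv n T C := (IHE T C a a (by simp only [List.length_cons] at *; omega) hK1).1 rfl
            exact kc_of_eq rfl ((Eqv.cons c hTC).trans hK2.symm)
          · obtain ⟨D, hTD, hCD⟩ := (IHE T C a b (by simp only [List.length_cons] at *; omega) hK1).2.1 hab
            exact kc_far hab (c :: D)
              ((Eqv.cons c hTD).trans (eqv_swap hcb D))
              (hK2.trans ((Eqv.cons c hCD).trans (eqv_swap hfac.symm D)))
          · obtain ⟨D, hTD, hCD⟩ := (IHE T C a b (by simp only [List.length_cons] at *; omega) hK1).2.2 hab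
            exact kc_adj hab (c :: D)
              ((Eqv.cons c hTD).trans ((eqv_swap hcb (a :: D)).trans
                (Eqv.cons b (eqv_swap hfac.symm D))))
              (hK2.trans ((Eqv.cons c hCD).trans ((eqv_swap hfac.symm (b :: D)).trans
                (Eqv.cons a (eqv_swap hcb D)))))
        · -- adj c b
          obtain ⟨C, hK1, hK2⟩ := K.2.2 hcb
          rcases trichotomy a b with heq2 | hab | hab
          · subst heq2
            exact (not_far_and_adj hfac hcb.symm).elim
          · -- far a b
            obtain ⟨D, hTD, hcCD⟩ := (IHE T (c :: C) a b (by simp only [List.length_cons] at *; omega) hK1).2.1 hab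
            have hlC : C.length ≤ L := by
              have h1 := hK1.length_eq; simp only [List.length_cons] at *; omega
            obtain ⟨E, hCE, hDE⟩ := (IHE C D c a hlC hcCD).2.1 hfac.symm
            exact kc_far hab (c :: b :: E)
              ((Eqv.cons c hTD).trans ((Eqv.cons c (Eqv.cons b hDE)).trans (eqv_braid hcb E)))
              (hK2.trans ((Eqv.cons c (Eqv.cons b hCE)).trans
                ((Eqv.cons c (eqv_swap hab.symm E)).trans (eqv_swap hfac.symm (b :: E)))))
          · -- adj a b
            obtain ⟨D, hTD, hcCD⟩ := (IHE T (c :: C) a b (by simp only [List.length_cons] at *; omega) hK1).2.2 hab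
            have hlC : C.length ≤ L := by
              have h1 := hK1.length_eq; simp only [List.length_cons] at *; omega
            obtain ⟨E, hCE, hbDE⟩ := (IHE C (b :: D) c a hlC hcCD).2.1 hfac.symm
            have hlD : D.length ≤ L := by
              have h1 := hK1.length_eq; have h2 := hcCD.length_eq
              simp only [List.length_cons] at *; omega
            obtain ⟨F, hDF, hEF⟩ := (IHE D E b c hlD hbDE).2.2 hcb.symm
            refine kc_adj hab (c :: b :: a :: F) ?_ ?_
            · refine (Eqv.cons c hTD).trans ?_
              refine (Eqv.cons c (Eqv.cons b (Eqv.cons a hDF))).trans ?_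
              refine (Eqv.cons c (Eqv.cons b (eqv_swap hfac (b :: F)))).trans ?_
              refine (eqv_braid hcb (a :: b :: F)).trans ?_
              refine (Eqv.cons b (Eqv.cons c (eqv_braid hab.symm F))).trans ?_
              exact Eqv.cons b (eqv_swap hfac.symm (b :: a :: F))
            · refine hK2.trans ?_
              refine (Eqv.cons c (Eqv.cons b hCE)).trans ?_
              refine (Eqv.cons c (Eqv.cons b (Eqv.cons a hEF))).trans ?_
              refine (Eqv.cons c (eqv_braid hab.symm (c :: F))).trans ?_
              refine (eqv_swap hfac.symm (b :: a :: c :: F)).trans ?_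
              refine (Eqv.cons a (Eqv.cons c (Eqv.cons b (eqv_swap hfac F)))).trans ?_
              exact Eqv.cons a (eqv_braid hcb (a :: F))
      · -- head braid step: u = c :: a :: T, adj a c
        have K := ihk (a :: c :: T) v c b (by simp only [List.length_cons] at *; omega) hc'
        rcases trichotomy c b with heq | hcb | hcb
        · subst heq
          have hK1 : Eqv n (a :: c :: T) v := K.1 rfl
          rcases trichotomy a c with heq2 | hab | hab
          · exact absurd heq2 hac.ne
          · exact (not_far_and_adj hab hac).elim
          · exact kc_adj hab T (Eqv.refl _) hK1.symm
        · -- far c b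
          obtain ⟨C, hK1, hK2⟩ := K.2.1 hcb
          rcases trichotomy a b with heq2 | hab | hab
          · subst heq2
            exact (not_far_and_adj hcb.symm hac).elim
          · -- far a b
            obtain ⟨D, hcTD, hCD⟩ := (IHE (c :: T) C a b (by simp only [List.length_cons] at *; omega) hK1).2.1 hab
            obtain ⟨E, hTE, hDE⟩ := (IHE T D c b (by simp only [List.length_cons] at *; omega) hcTD).2.1 hcb
            exact kc_far hab (c :: a :: E)
              ((Eqv.cons c (Eqv.cons a hTE)).trans ((Eqv.cons c (eqv_swap hab E)).trans
                (eqv_swap hcb (a :: E))))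
              (hK2.trans ((Eqv.cons c hCD).trans ((Eqv.cons c (Eqv.cons a hDE)).trans
                (eqv_braid hac.symm E))))
          · -- adj a b
            obtain ⟨D, hcTD, hCD⟩ := (IHE (c :: T) C a b (by simp only [List.length_cons] at *; omega) hK1).2.2 hab
            obtain ⟨E, hTE, haDE⟩ := (IHE T (a :: D) c b (by simp only [List.length_cons] at *; omega) hcTD).2.1 hcb
            have hlD : D.length ≤ L := by
              have h1 := hcTD.length_eq; simp only [List.length_cons] at *; omega
            obtain ⟨F, hDF, hEF⟩ := (IHE D E a c hlD haDE).2.2 hac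
            refine kc_adj hab (c :: a :: b :: F) ?_ ?_
            · refine (Eqv.cons c (Eqv.cons a hTE)).trans ?_
              refine (Eqv.cons c (Eqv.cons a (Eqv.cons b hEF))).trans ?_
              refine (Eqv.cons c (eqv_braid hab (c :: F))).trans ?_
              refine (eqv_swap hcb (a :: b :: c :: F)).trans ?_
              refine (Eqv.cons b (Eqv.cons c (Eqv.cons a (eqv_swap hcb.symm F)))).trans ?_
              exact Eqv.cons b (eqv_braid hac.symm (b :: F))
            · refine hK2.trans ((Eqv.cons c hCD).trans ?_)
              refine (Eqv.cons c (Eqv.cons a (Eqv.cons b hDF))).trans ?_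
              refine (Eqv.cons c (Eqv.cons a (eqv_swap hcb.symm (a :: F)))).trans ?_
              refine (eqv_braid hac.symm (b :: a :: F)).trans ?_
              refine (Eqv.cons a (Eqv.cons c (eqv_braid hab F))).trans ?_
              exact Eqv.cons a (eqv_swap hcb (a :: b :: F))
        · -- adj c b
          obtain ⟨C, hK1, hK2⟩ := K.2.2 hcb
          rcases trichotomy a b with heq2 | hab | hab
          · subst heq2
            have h1 : Eqv n (c :: T) (c :: C) :=
              (IHE (c :: T) (c :: C) a a (by simp only [List.length_cons] at *; omega) hK1).1 rfl
            have h2 : Eqv n T C := (IHE T C c c (by simp only [List.length_cons] at *; omega) h1).1 rfl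
            exact kc_of_eq rfl ((Eqv.cons c (Eqv.cons a h2)).trans hK2.symm)
          · -- far a b
            obtain ⟨D, hcTD, hcCD⟩ :=
              (IHE (c :: T) (c :: C) a b (by simp only [List.length_cons] at *; omega) hK1).2.1 hab
            obtain ⟨E, hTE, hDE⟩ := (IHE T D c b (by simp only [List.length_cons] at *; omega) hcTD).2.2 hcb
            have hlC : C.length ≤ L := by
              have h1 := hK1.length_eq; simp only [List.length_cons] at *; omega
            obtain ⟨F, hCF, hDF⟩ := (IHE C D c a hlC hcCD).2.2 hac.symm
            have hbEaF : Eqv n (c :: b :: E) (c :: a :: F) := hDE.symm.trans hDF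
            have hlbE : (b :: E).length ≤ L := by
              have h1 := hcTD.length_eq; have h2 := hDE.length_eq
              simp only [List.length_cons] at *; omega
            have hba : Eqv n (b :: E) (a :: F) :=
              (IHE (b :: E) (a :: F) c c hlbE hbEaF).1 rfl
            have hlE : E.length ≤ L := by
              have h1 := hcTD.length_eq; have h2 := hDE.length_eq
              simp only [List.length_cons] at *; omega
            obtain ⟨G, hEG, hFG⟩ := (IHE E F b a hlE hba).2.1 hab.symm
            refine kc_far hab (c :: a :: b :: c :: G) ?_ ?_
            · refine (Eqv.cons c (Eqv.cons a hTE)).trans ?_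
              refine (Eqv.cons c (Eqv.cons a (Eqv.cons b (Eqv.cons c hEG)))).trans ?_
              refine (Eqv.cons c (eqv_swap hab (c :: a :: G))).trans ?_
              refine (Eqv.cons c (Eqv.cons b (eqv_braid hac G))).trans ?_
              refine (eqv_braid hcb (a :: c :: G)).trans ?_
              exact Eqv.cons b (Eqv.cons c (eqv_swap hab.symm (c :: G)))
            · refine hK2.trans ?_
              refine (Eqv.cons c (Eqv.cons b hCF)).trans ?_
              refine (Eqv.cons c (Eqv.cons b (Eqv.cons a (Eqv.cons c hFG)))).trans ?_
              refine (Eqv.cons c (eqv_swap hab.symm (c :: b :: G))).trans ?_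
              refine (Eqv.cons c (Eqv.cons a (eqv_braid hcb.symm G))).trans ?_
              exact eqv_braid hac.symm (b :: c :: G)
          · -- adj a b : impossible
            exact absurd hab (by
              rcases hac with h1 | h1 <;> rcases hcb with h2 | h2 <;>
                (intro h3; rcases h3 with h3 | h3 <;> omega))

theorem key {u v : List (Ltr n)} {a b : Ltr n} (h : Eqv n (a :: u) (b :: v)) :
    KC n u v a b := by
  obtain ⟨k, hk⟩ := eqv_iff_chain.mp h
  exact keyChain u.length k u v a b le_rfl hk

/-! ### Bridge between word rewriting and the monoid `B_n^+` -/

/-- The class of a single letter. -/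
def g (n : ℕ) (a : Ltr n) : PB n := pr n (FreeMonoid.of a)

/-- The class of a word given as a list. -/
def prl (n : ℕ) (l : List (Ltr n)) : PB n := pr n (FreeMonoid.ofList l)

lemma prl_nil : prl n [] = 1 := by
  simp [prl, FreeMonoid.ofList_nil]

lemma prl_append (l1 l2 : List (Ltr n)) : prl n (l1 ++ l2) = prl n l1 * prl n l2 := by
  simp [prl, FreeMonoid.ofList_append]

lemma prl_cons (a : Ltr n) (l : List (Ltr n)) : prl n (a :: l) = g n a * prl n l := by
  simp [prl, g, FreeMonoid.ofList_cons]

lemma sigma_eq_of {i : ℕ} (h1 : 1 ≤ i) (h2 : i ≤ n - 1) :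
    sigma n i = FreeMonoid.of (⟨i - 1, by omega⟩ : Ltr n) := by
  rw [sigma, dif_pos ⟨h1, h2⟩]

lemma sigma_eq_g (a : Ltr n) : sigma n (a.1 + 1) = FreeMonoid.of a := by
  have ha := a.2
  rw [sigma_eq_of (by omega) (by omega)]
  exact congrArg FreeMonoid.of (Fin.ext (by show a.1 + 1 - 1 = a.1; omega))

lemma pr_sigma_eq_g (a : Ltr n) : pr n (sigma n (a.1 + 1)) = g n a := by
  rw [sigma_eq_g]; rfl

/-- The congruence whose relation is `Eqv`. -/
def eqvCon (n : ℕ) : Con (Word n) where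
  r u v := Eqv n (FreeMonoid.toList u) (FreeMonoid.toList v)
  iseqv := ⟨fun u => Eqv.refl _, Eqv.symm, Eqv.trans⟩
  mul' := by
    intro u v u' v' h h'
    have h1 : Eqv n (FreeMonoid.toList u ++ FreeMonoid.toList u')
        (FreeMonoid.toList v ++ FreeMonoid.toList u') := h.append_right _
    have h2 : Eqv n (FreeMonoid.toList v ++ FreeMonoid.toList u')
        (FreeMonoid.toList v ++ FreeMonoid.toList v') := by
      have := h'.append (p := FreeMonoid.toList v) (s := [])
      simpa using this
    exact h1.trans h2

lemma eqv_to_braidCon {l1 l2 : List (Ltr n)} (h : Eqv n l1 l2) :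
    braidCon n (FreeMonoid.ofList l1) (FreeMonoid.ofList l2) := by
  induction h with
  | refl => exact (braidCon n).refl _
  | tail h1 h2 ih =>
    refine (braidCon n).trans ih ?_
    obtain ⟨p, x, y, s, hb, hu, hv⟩ := h2
    have hx : braidCon n (FreeMonoid.ofList x) (FreeMonoid.ofList y) := by
      cases hb with
      | @comm a b hf =>
        have := ConGen.Rel.of _ _ (BraidRel.comm (a.1 + 1) (b.1 + 1)
          (by omega) (by omega : a.1 + 1 ≤ n - 1) (by omega)
          (by omega : b.1 + 1 ≤ n - 1) (hf.imp (fun h => by omega) (fun h => by omega)))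
        rwa [sigma_eq_g, sigma_eq_g] at this
      | @braid a b hab =>
        have hb2 := b.2
        have := ConGen.Rel.of _ _ (BraidRel.braid (a.1 + 1) (by omega)
          (by omega : a.1 + 1 + 1 ≤ n - 1))
        rw [sigma_eq_g] at this
        have hbb : sigma n (a.1 + 1 + 1) = FreeMonoid.of b := by
          rw [hab, sigma_eq_g]
        rwa [hbb] at this
      | @braid' a b hab =>
        have hb2 := b.2
        have := ConGen.Rel.of _ _ (BraidRel.braid (a.1 + 1) (by omega)
          (by omega : a.1 + 1 + 1 ≤ n - 1))
        rw [sigma_eq_g] at this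
        have hbb : sigma n (a.1 + 1 + 1) = FreeMonoid.of b := by
          rw [hab, sigma_eq_g]
        rw [hbb] at this
        exact (braidCon n).symm this
    have h3 : braidCon n (FreeMonoid.ofList p * FreeMonoid.ofList x * FreeMonoid.ofList s)
        (FreeMonoid.ofList p * FreeMonoid.ofList y * FreeMonoid.ofList s) :=
      (braidCon n).mul ((braidCon n).mul ((braidCon n).refl _) hx) ((braidCon n).refl _)
    rw [← FreeMonoid.ofList_append, ← FreeMonoid.ofList_append,
      ← FreeMonoid.ofList_append, ← FreeMonoid.ofList_append] at h3
    rw [hu, hv]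
    exact h3

lemma braidCon_iff_eqv {u v : Word n} :
    braidCon n u v ↔ Eqv n (FreeMonoid.toList u) (FreeMonoid.toList v) := by
  constructor
  · intro h
    refine (Con.conGen_le (c := eqvCon n)).2 ?_ h
    intro x y hxy
    cases hxy with
    | comm i j hi1 hi2 hj1 hj2 hij =>
      show Eqv n _ _
      rw [sigma_eq_of hi1 hi2, sigma_eq_of hj1 hj2]
      exact Eqv.single ⟨[], [⟨i - 1, by omega⟩, ⟨j - 1, by omega⟩],
        [⟨j - 1, by omega⟩, ⟨i - 1, by omega⟩], [],
        Bst.comm (by simp [far]; omega), rfl, rfl⟩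
    | braid i hi1 hi2 =>
      show Eqv n _ _
      rw [sigma_eq_of hi1 (by omega), sigma_eq_of (by omega : 1 ≤ i + 1) hi2]
      exact Eqv.single ⟨[], [⟨i - 1, by omega⟩, ⟨i + 1 - 1, by omega⟩, ⟨i - 1, by omega⟩],
        [⟨i + 1 - 1, by omega⟩, ⟨i - 1, by omega⟩, ⟨i + 1 - 1, by omega⟩], [],
        Bst.braid (by simp; omega), rfl, rfl⟩
  · intro h
    have h2 := eqv_to_braidCon h
    simpa [FreeMonoid.ofList_toList] using h2

lemma pr_eq_iff {u v : Word n} :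
    pr n u = pr n v ↔ Eqv n (FreeMonoid.toList u) (FreeMonoid.toList v) := by
  rw [← braidCon_iff_eqv]
  exact Con.eq _

lemma prl_eq_iff {l1 l2 : List (Ltr n)} : prl n l1 = prl n l2 ↔ Eqv n l1 l2 := pr_eq_iff

/-! ### Length -/

lemma lenHom_ofList (l : List (Ltr n)) :
    lenHom n (FreeMonoid.ofList l) = Multiplicative.ofAdd (l.length : ℕ) := by
  induction l with
  | nil => rfl
  | cons a t ih =>
    rw [FreeMonoid.ofList_cons, map_mul, ih]
    have : lenHom n (FreeMonoid.of a) = Multiplicative.ofAdd 1 := by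
      simp [lenHom]
    rw [this]
    simp [← ofAdd_add]
    omega

lemma len_prl (l : List (Ltr n)) : len n (prl n l) = l.length := by
  have : Con.lift _ (lenHom n) (braidCon_le_ker n) ((braidCon n).mk' (FreeMonoid.ofList l)) =
      lenHom n (FreeMonoid.ofList l) := Con.lift_mk' _ _
  rw [len, prl, pr, this, lenHom_ofList]
  rfl

lemma exists_rep (x : PB n) : ∃ l : List (Ltr n), prl n l = x := by
  obtain ⟨w, hw⟩ := Con.mk'_surjective (c := braidCon n) x
  exact ⟨FreeMonoid.toList w, hw⟩

lemma len_mul (x y : PB n) : len n (x * y) = len n x + len n y := by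
  obtain ⟨l1, rfl⟩ := exists_rep x
  obtain ⟨l2, rfl⟩ := exists_rep y
  rw [← prl_append, len_prl, len_prl, len_prl, List.length_append]

lemma len_g (a : Ltr n) : len n (g n a) = 1 := by
  have : g n a = prl n [a] := by simp [prl, g, FreeMonoid.ofList_singleton]
  rw [this, len_prl]; rfl

lemma eq_one_of_len_zero {x : PB n} (h : len n x = 0) : x = 1 := by
  obtain ⟨l, rfl⟩ := exists_rep x
  rw [len_prl] at h
  rw [List.length_eq_zero_iff.mp h, prl_nil]

/-! ### Divisibility and cancellation -/

lemma ldvd_refl (x : PB n) : ldvd n x x := ⟨1, mul_one x⟩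

lemma ldvd_trans {x y z : PB n} (h1 : ldvd n x y) (h2 : ldvd n y z) : ldvd n x z := by
  obtain ⟨c, rfl⟩ := h1; obtain ⟨d, rfl⟩ := h2
  exact ⟨c * d, (mul_assoc _ _ _).symm⟩

lemma ldvd_mul_right (x y : PB n) : ldvd n x (x * y) := ⟨y, rfl⟩

lemma ldvd_mul_left {x y : PB n} (c : PB n) (h : ldvd n x y) : ldvd n (c * x) (c * y) := by
  obtain ⟨d, rfl⟩ := h
  exact ⟨d, mul_assoc _ _ _⟩

lemma len_le_of_ldvd {x y : PB n} (h : ldvd n x y) : len n x ≤ len n y := by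
  obtain ⟨c, rfl⟩ := h; rw [len_mul]; omega

lemma ldvd_antisymm {x y : PB n} (h1 : ldvd n x y) (h2 : ldvd n y x) : x = y := by
  obtain ⟨c, rfl⟩ := h1
  have h3 := len_le_of_ldvd h2
  rw [len_mul] at h3
  have : len n c = 0 := by omega
  rw [eq_one_of_len_zero this, mul_one]

/-- Left cancellation by a generator. -/
lemma g_cancel {a : Ltr n} {x y : PB n} (h : g n a * x = g n a * y) : x = y := by
  obtain ⟨lx, rfl⟩ := exists_rep x
  obtain ⟨ly, rfl⟩ := exists_rep y
  rw [← prl_cons, ← prl_cons] at h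
  exact prl_eq_iff.mpr ((key (prl_eq_iff.mp h)).1 rfl)

lemma prl_cancel {x y : PB n} (l : List (Ltr n)) (h : prl n l * x = prl n l * y) : x = y := by
  induction l with
  | nil => simpa [prl_nil] using h
  | cons a t ih =>
    rw [prl_cons, mul_assoc, mul_assoc] at h
    exact ih (g_cancel h)

lemma mul_left_cancel' {c x y : PB n} (h : c * x = c * y) : x = y := by
  obtain ⟨l, rfl⟩ := exists_rep c
  exact prl_cancel l h

lemma ldvd_cancel {a : Ltr n} {x y : PB n} (h : ldvd n (g n a * x) (g n a * y)) : ldvd n x y := by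
  obtain ⟨c, hc⟩ := h
  rw [mul_assoc] at hc
  exact ⟨c, mul_left_cancel' hc⟩

/-- Heads of two representations of the same element: the key lemma at the monoid level. -/
lemma key_mon {a b : Ltr n} {x y : PB n} (h : g n a * x = g n b * y) :
    (a = b → x = y) ∧
    (far a b → ∃ c, x = g n b * c ∧ y = g n a * c) ∧
    (adj a b → ∃ c, x = g n b * (g n a * c) ∧ y = g n a * (g n b * c)) := by
  obtain ⟨lx, rfl⟩ := exists_rep x
  obtain ⟨ly, rfl⟩ := exists_rep y
  rw [← prl_cons, ← prl_cons] at h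
  have K := key (prl_eq_iff.mp h)
  refine ⟨fun he => ?_, fun hf => ?_, fun ha => ?_⟩
  · exact prl_eq_iff.mpr (K.1 he)
  · obtain ⟨C, h1, h2⟩ := K.2.1 hf
    exact ⟨prl n C, by rw [← prl_cons]; exact prl_eq_iff.mpr h1,
      by rw [← prl_cons]; exact prl_eq_iff.mpr h2⟩
  · obtain ⟨C, h1, h2⟩ := K.2.2 ha
    exact ⟨prl n C, by rw [← prl_cons, ← prl_cons]; exact prl_eq_iff.mpr h1,
      by rw [← prl_cons, ← prl_cons]; exact prl_eq_iff.mpr h2⟩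

lemma exists_head {x : PB n} (h : x ≠ 1) : ∃ (b : Ltr n) (x' : PB n), x = g n b * x' := by
  obtain ⟨l, rfl⟩ := exists_rep x
  cases l with
  | nil => exact absurd prl_nil h
  | cons a t => exact ⟨a, prl n t, prl_cons a t⟩

/-- The braid relations at the monoid level. -/
lemma g_braid_far {a b : Ltr n} (h : far a b) : g n a * g n b = g n b * g n a := by
  have : prl n [a, b] = prl n [b, a] := prl_eq_iff.mpr (eqv_swap h [])
  simpa [prl_cons, prl_nil] using this

lemma g_braid_adj {a b : Ltr n} (h : adj a b) :
    g n a * (g n b * g n a) = g n b * (g n a * g n b) := by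
  have : prl n [a, b, a] = prl n [b, a, b] := prl_eq_iff.mpr (eqv_braid h [])
  simpa [prl_cons, prl_nil] using this

/-- Existence of the least common multiple of a generator and an element, below any
common multiple. -/
lemma lcm_exists : ∀ N : ℕ, ∀ z x : PB n, ∀ a : Ltr n, len n z ≤ N →
    ldvd n (g n a) z → ldvd n x z → ∃ m, IsLcm n {g n a, x} m := by
  intro N
  induction N with
  | zero =>
    intro z x a hN ha hx
    exfalso
    have h1 := len_le_of_ldvd ha
    rw [len_g] at h1
    omega
  | succ N ih =>
    intro z x a hN ha hx
    by_cases hx1 : x = 1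
    · subst hx1
      refine ⟨g n a, fun y hy => ?_, fun e he => he _ (Set.mem_insert _ _)⟩
      rcases hy with rfl | hy
      · exact ldvd_refl _
      · simp at hy; rw [hy]; exact ⟨g n a, one_mul _⟩
    · obtain ⟨b, x', rfl⟩ := exists_head hx1
      rcases trichotomy a b with rfl | hab | hab
      · -- a = b : lcm = x
        refine ⟨g n a * x', fun y hy => ?_, fun e he => he _ (by simp)⟩
        rcases hy with rfl | hy
        · exact ⟨x', rfl⟩
        · simp at hy; rw [hy]; exact ldvd_refl _
      · -- far
        obtain ⟨za, hza⟩ := ha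
        obtain ⟨zx, hzx⟩ := hx
        rw [mul_assoc] at hzx
        have hkey := (key_mon (n := n) (hza.trans hzx.symm)).2.1 hab
        obtain ⟨c, hc1, hc2⟩ := hkey
        -- z = g b * (g a * c) ; zbar := g a * c
        have hz : z = g n b * (g n a * c) := by rw [← hzx, hc2]
        have hlen : len n (g n a * c) ≤ N := by
          have := congrArg (len n) hz
          rw [len_mul, len_g] at this
          omega
        have hax' : ldvd n x' (g n a * c) := ⟨zx, hc2⟩
        obtain ⟨m1, hm1⟩ := ih (g n a * c) x' a hlen ⟨c, rfl⟩ hax'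
        have hm1a : ldvd n (g n a) m1 := hm1.1 _ (Set.mem_insert _ _)
        have hm1x : ldvd n x' m1 := hm1.1 _ (by simp)
        refine ⟨g n b * m1, fun y hy => ?_, fun e he => ?_⟩
        · rcases hy with rfl | hy
          · -- g a ≼ g b * m1
            obtain ⟨d, hd⟩ := hm1a
            refine ⟨g n b * d, ?_⟩
            rw [← hd]
            have := congrArg (· * d) (g_braid_far hab)
            simpa [mul_assoc] using this
          · simp at hy; rw [hy]
            exact ldvd_mul_left _ hm1x
        · -- leastness
          have hea : ldvd n (g n a) e := he _ (Set.mem_insert _ _)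
          have hex : ldvd n (g n b * x') e := he _ (by simp)
          obtain ⟨ea, hea'⟩ := hea
          obtain ⟨ex, hex'⟩ := hex
          rw [mul_assoc] at hex'
          obtain ⟨c', hc1', hc2'⟩ := (key_mon (n := n) (hea'.trans hex'.symm)).2.1 hab
          -- e = g b * (g a * c')
          have hem : ldvd n m1 (g n a * c') :=
            hm1.2 _ (fun y hy => by
              rcases hy with rfl | hy
              · exact ⟨c', rfl⟩
              · simp at hy; rw [hy]; exact ⟨ex, hc2'⟩)
          have he2 : e = g n b * (g n a * c') := by rw [← hex', hc2']
          rw [he2]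
          exact ldvd_mul_left _ hem
      · -- adj
        obtain ⟨za, hza⟩ := ha
        obtain ⟨zx, hzx⟩ := hx
        rw [mul_assoc] at hzx
        obtain ⟨c, hc1, hc2⟩ := (key_mon (n := n) (hza.trans hzx.symm)).2.2 hab
        -- zx-part : x' * zx = g a * (g b * c)
        have hz : z = g n b * (g n a * (g n b * c)) := by rw [← hzx, hc2]
        have hlen1 : len n (g n a * (g n b * c)) ≤ N := by
          have := congrArg (len n) hz
          rw [len_mul, len_g] at this
          omega
        have hax' : ldvd n x' (g n a * (g n b * c)) := ⟨zx, hc2⟩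
        obtain ⟨m1, hm1⟩ := ih (g n a * (g n b * c)) x' a hlen1 ⟨g n b * c, rfl⟩ hax'
        have hm1a : ldvd n (g n a) m1 := hm1.1 _ (Set.mem_insert _ _)
        have hm1x : ldvd n x' m1 := hm1.1 _ (by simp)
        obtain ⟨m1', rfl⟩ := hm1a
        have hm1le : ldvd n (g n a * m1') (g n a * (g n b * c)) :=
          hm1.2 _ (fun y hy => by
            rcases hy with rfl | hy
            · exact ⟨g n b * c, rfl⟩
            · simp at hy; rw [hy]; exact hax')
        have hm1'le : ldvd n m1' (g n b * c) := ldvd_cancel hm1le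
        have hlen2 : len n (g n b * c) ≤ N := by
          have := congrArg (len n) hz
          rw [len_mul, len_g, len_mul, len_g] at this
          omega
        obtain ⟨m2, hm2⟩ := ih (g n b * c) m1' b (by omega) ⟨c, rfl⟩ hm1'le
        have hm2b : ldvd n (g n b) m2 := hm2.1 _ (Set.mem_insert _ _)
        have hm2m : ldvd n m1' m2 := hm2.1 _ (by simp)
        refine ⟨g n b * (g n a * m2), fun y hy => ?_, fun e he => ?_⟩
        · rcases hy with rfl | hy
          · -- g a ≼ g b * (g a * m2) since g b ≼ m2
            obtain ⟨d, hd⟩ := hm2b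
            refine ⟨g n b * (g n a * d), ?_⟩
            rw [← hd]
            have := congrArg (· * d) (g_braid_adj hab)
            simpa [mul_assoc] using this
          · simp at hy; rw [hy]
            exact ldvd_mul_left _ (ldvd_trans hm1x (ldvd_mul_left _ hm2m))
        · -- leastness
          have hea : ldvd n (g n a) e := he _ (Set.mem_insert _ _)
          have hex : ldvd n (g n b * x') e := he _ (by simp)
          obtain ⟨ea, hea'⟩ := hea
          obtain ⟨ex, hex'⟩ := hex
          rw [mul_assoc] at hex'
          obtain ⟨c', hc1', hc2'⟩ := (key_mon (n := n) (hea'.trans hex'.symm)).2.2 hab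
          -- e = g b * (g a * (g b * c'))
          have he2 : e = g n b * (g n a * (g n b * c')) := by rw [← hex', hc2']
          have hem1 : ldvd n (g n a * m1') (g n a * (g n b * c')) :=
            hm1.2 _ (fun y hy => by
              rcases hy with rfl | hy
              · exact ⟨g n b * c', rfl⟩
              · simp at hy; rw [hy]; exact ⟨ex, hc2'⟩)
          have hem1' : ldvd n m1' (g n b * c') := ldvd_cancel hem1
          have hem2 : ldvd n m2 (g n b * c') :=
            hm2.2 _ (fun y hy => by
              rcases hy with rfl | hy
              · exact ⟨c', rfl⟩
              · simp at hy; rw [hy]; exact hem1')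
          rw [he2]
          exact ldvd_mul_left _ (ldvd_mul_left _ hem2)

/-! ### The lexicographic order and `L_n` -/

lemma lex_append_same : ∀ {l1 l2 : List (Ltr n)} (s : List (Ltr n)),
    l1.length = l2.length → List.Lex (· < ·) l1 l2 → List.Lex (· < ·) (l1 ++ s) (l2 ++ s) := by
  intro l1 l2 s hlen h
  induction h with
  | nil => simp at hlen
  | rel h => exact List.Lex.rel h
  | cons h ih => exact List.Lex.cons (ih (by simpa using hlen))

lemma lex_prefix_lt {i a : Ltr n} (h : i < a) :
    ∀ (p t s : List (Ltr n)), List.Lex (· < ·) (p ++ i :: t) (p ++ a :: s) := by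
  intro p
  induction p with
  | nil => exact fun t s => List.Lex.rel h
  | cons x xs ih => exact fun t s => List.Lex.cons (ih t s)

lemma lex_decomp : ∀ {l1 l2 : List (Ltr n)}, l1.length = l2.length →
    List.Lex (· < ·) l1 l2 →
    ∃ (p : List (Ltr n)) (i : Ltr n) (t : List (Ltr n)) (a : Ltr n) (s : List (Ltr n)), l1 = p ++ i :: t ∧ l2 = p ++ a :: s ∧ i < a := by
  intro l1 l2 hlen h
  induction h with
  | nil => simp at hlen
  | @rel a l1' b l2' h => exact ⟨[], a, l1', b, l2', rfl, rfl, h⟩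
  | @cons a l1' l2' h ih =>
    obtain ⟨p, i, t, c, s, h1, h2, hic⟩ := ih (by simpa using hlen)
    exact ⟨a :: p, i, t, c, s, by rw [h1]; rfl, by rw [h2]; rfl, hic⟩

lemma lex_total : ∀ {l1 l2 : List (Ltr n)}, l1.length = l2.length → l1 ≠ l2 →
    List.Lex (· < ·) l1 l2 ∨ List.Lex (· < ·) l2 l1 := by
  intro l1
  induction l1 with
  | nil => intro l2 hlen _; cases l2 with
    | nil => simp_all
    | cons b t => simp at hlen
  | cons a t ih =>
    intro l2 hlen hne
    cases l2 with
    | nil => simp at hlen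
    | cons b s =>
      rcases lt_trichotomy a b with h | rfl | h
      · exact Or.inl (List.Lex.rel h)
      · have : t ≠ s := fun h => hne (by rw [h])
        rcases ih (by simpa using hlen) this with h | h
        · exact Or.inl (List.Lex.cons h)
        · exact Or.inr (List.Lex.cons h)
      · exact Or.inr (List.Lex.rel h)

lemma len_eq_of_pr_eq {u v : Word n} (h : pr n u = pr n v) :
    (FreeMonoid.toList u).length = (FreeMonoid.toList v).length :=
  (pr_eq_iff.mp h).length_eq

/-- Statement 3, part 1 : removing the last letter of a lex representative. -/
lemma Ln_of_mul_right {u s : Word n} (h : u * s ∈ Ln n) : u ∈ Ln n := by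
  intro v hv hlex
  exact h (v * s) (by rw [map_mul, map_mul, hv])
    (lex_append_same _ (len_eq_of_pr_eq hv) hlex)

lemma finite_words (k : ℕ) : {l : List (Ltr n) | l.length = k}.Finite := by
  induction k with
  | zero =>
    refine (Set.finite_singleton ([] : List (Ltr n))).subset ?_
    intro l hl
    simp only [Set.mem_setOf_eq] at hl
    simp [List.length_eq_zero_iff.mp hl]
  | succ k ih =>
    have hsub : {l : List (Ltr n) | l.length = k + 1} ⊆
        Set.image2 List.cons Set.univ {l : List (Ltr n) | l.length = k} := by
      intro l hl
      cases l with
      | nil => simp at hl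
      | cons a t =>
        simp only [Set.mem_setOf_eq, List.length_cons] at hl
        exact Set.mem_image2_of_mem (Set.mem_univ a) (by simp; omega)
    exact (Set.Finite.image2 _ Set.finite_univ ih).subset hsub

lemma exists_ln_rep (β : PB n) : ∃ w : Word n, pr n w = β ∧ w ∈ Ln n := by
  obtain ⟨l0, hl0⟩ := exists_rep β
  have hS : {l : List (Ltr n) | prl n l = β}.Finite := by
    refine (finite_words (len n β)).subset ?_
    intro l hl
    simp only [Set.mem_setOf_eq] at hl ⊢
    rw [← hl, len_prl]
  obtain ⟨m, hmS, hmin⟩ := Set.exists_min_image _ id hS ⟨l0, hl0⟩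
  refine ⟨FreeMonoid.ofList m, hmS, ?_⟩
  intro v hv hlex
  have hvS : FreeMonoid.toList v ∈ {l : List (Ltr n) | prl n l = β} := by
    simp only [Set.mem_setOf_eq]
    calc prl n (FreeMonoid.toList v) = pr n v := by rw [prl, FreeMonoid.ofList_toList]
    _ = pr n (FreeMonoid.ofList m) := hv
    _ = β := hmS
  have h1 : (m : List (Ltr n)) ≤ FreeMonoid.toList v := hmin _ hvS
  have h2 : (FreeMonoid.toList v : List (Ltr n)) < m := hlex
  exact absurd h2 (not_lt.mpr h1)

lemma omegaRep_spec (β : PB n) : pr n (omegaRep n β) = β ∧ omegaRep n β ∈ Ln n := by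
  rw [omegaRep, dif_pos (exists_ln_rep β)]
  exact (exists_ln_rep β).choose_spec

lemma omegaRep_of_mem {w : Word n} (hw : w ∈ Ln n) : omegaRep n (pr n w) = w := by
  have h1 := omegaRep_spec (n := n) (pr n w)
  by_contra hne
  have hlen : (FreeMonoid.toList (omegaRep n (pr n w))).length =
      (FreeMonoid.toList w).length := len_eq_of_pr_eq h1.1
  have hne' : FreeMonoid.toList (omegaRep n (pr n w)) ≠ FreeMonoid.toList w :=
    fun h => hne (FreeMonoid.toList.injective h)
  rcases lex_total hlen hne' with h | h
  · exact hw _ h1.1 h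
  · exact h1.2 w h1.1.symm h

/-! ### Characterization of `L_n` and of forbidden prefixes -/

lemma prl_singleton (x : Ltr n) : prl n [x] = g n x := by
  rw [prl_cons, prl_nil, mul_one]

lemma mem_Ln_iff {l : List (Ltr n)} :
    FreeMonoid.ofList l ∈ Ln n ↔
    ∀ (p : List (Ltr n)) (a : Ltr n) (s : List (Ltr n)), l = p ++ a :: s →
      ∀ i : Ltr n, i < a → ¬ ldvd n (g n i) (prl n (a :: s)) := by
  constructor
  · rintro hLn p a s hdec i hia ⟨c, hc⟩
    obtain ⟨cw, rfl⟩ := exists_rep c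
    refine hLn (FreeMonoid.ofList (p ++ i :: cw)) ?_ ?_
    · show prl n _ = prl n _
      rw [hdec, prl_append, prl_append, prl_cons, hc]
    · show List.Lex _ _ _
      rw [hdec]
      exact lex_prefix_lt hia p cw s
  · intro H v hv hlex
    have hlen : (FreeMonoid.toList v).length = l.length := len_eq_of_pr_eq hv
    obtain ⟨p, i, t, a, s, hv1, hl2, hia⟩ := lex_decomp hlen hlex
    have hpr : prl n (i :: t) = prl n (a :: s) := by
      have h2 : prl n (p ++ i :: t) = prl n (p ++ a :: s) := by
        rw [← hv1, ← hl2]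
        show pr n _ = pr n _
        rw [FreeMonoid.ofList_toList]
        exact hv
      rw [prl_append, prl_append] at h2
      exact prl_cancel p h2
    exact H p a s hl2 i hia ⟨prl n t, by rw [← prl_cons]; exact hpr⟩

lemma append_split {w r p s : List (Ltr n)} {a : Ltr n} (h : w ++ r = p ++ a :: s) :
    (∃ p', p = w ++ p' ∧ r = p' ++ a :: s) ∨ (∃ t, w = p ++ a :: t ∧ s = t ++ r) := by
  rcases List.append_eq_append_iff.mp h with ⟨p', hp, hr⟩ | ⟨c', hw, hs⟩
  · exact Or.inl ⟨p', hp, hr⟩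
  · cases c' with
    | nil => exact Or.inl ⟨[], by simpa using hw.symm, by simpa using hs.symm⟩
    | cons x t =>
      simp only [List.cons_append, List.cons.injEq] at hs
      obtain ⟨rfl, hs2⟩ := hs
      exact Or.inr ⟨t, hw, hs2⟩

lemma mem_Fset_iff {w : Word n} (hw : w ∈ Ln n) (α : PB n) :
    α ∈ Fset n w ↔ ∃ (p : List (Ltr n)) (a : Ltr n) (t : List (Ltr n)),
      FreeMonoid.toList w = p ++ a :: t ∧
      ∃ i : Ltr n, i < a ∧ ldvd n (g n i) (prl n (a :: t) * α) := by
  have hωspec := omegaRep_spec (n := n) α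
  have hmem : (w * omegaRep n α ∈ Ln n) ↔
      ∀ (p : List (Ltr n)) (a : Ltr n) (s : List (Ltr n)),
        (FreeMonoid.toList w ++ FreeMonoid.toList (omegaRep n α)) = p ++ a :: s →
        ∀ i : Ltr n, i < a → ¬ ldvd n (g n i) (prl n (a :: s)) := by
    have h0 := mem_Ln_iff (n := n)
      (l := FreeMonoid.toList w ++ FreeMonoid.toList (omegaRep n α))
    rwa [FreeMonoid.ofList_append, FreeMonoid.ofList_toList, FreeMonoid.ofList_toList] at h0
  have hsuf : ∀ (t : List (Ltr n)) (a : Ltr n),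
      prl n (a :: (t ++ FreeMonoid.toList (omegaRep n α))) = prl n (a :: t) * α := by
    intro t a
    rw [show (a :: (t ++ FreeMonoid.toList (omegaRep n α))) =
      (a :: t) ++ FreeMonoid.toList (omegaRep n α) from rfl, prl_append]
    congr 1
    rw [prl, FreeMonoid.ofList_toList]
    exact hωspec.1
  constructor
  · intro hF
    have hnot : ¬ (w * omegaRep n α ∈ Ln n) := hF
    rw [hmem] at hnot
    push_neg at hnot
    obtain ⟨p, a, s, hdec, i, hia, hdvd⟩ := hnot
    rcases append_split hdec with ⟨p', hp, hr⟩ | ⟨t, hw1, hs⟩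
    · exfalso
      have h2 := mem_Ln_iff.mp
        (by rw [FreeMonoid.ofList_toList]; exact hωspec.2) p' a s hr i hia
      exact h2 hdvd
    · refine ⟨p, a, t, hw1, i, hia, ?_⟩
      rw [hs, hsuf] at hdvd
      exact hdvd
  · rintro ⟨p, a, t, hw1, i, hia, hdvd⟩
    intro hLn
    have h2 := (hmem.mp hLn) p a (t ++ FreeMonoid.toList (omegaRep n α))
      (by rw [hw1]; simp) i hia
    rw [hsuf] at h2
    exact h2 hdvd

lemma Fmin_subset_Fset {w : Word n} : Fmin n w ⊆ Fset n w := fun _ h => h.1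

lemma Fset_upward {w : Word n} (hw : w ∈ Ln n) {α α' : PB n} (h : α ∈ Fset n w)
    (hle : ldvd n α α') : α' ∈ Fset n w := by
  rw [mem_Fset_iff hw] at h ⊢
  obtain ⟨p, a, t, h1, i, hia, hdvd⟩ := h
  exact ⟨p, a, t, h1, i, hia, ldvd_trans hdvd (ldvd_mul_left _ hle)⟩

lemma Fmin_below {w : Word n} : ∀ (N : ℕ) (α : PB n), len n α ≤ N → α ∈ Fset n w →
    ∃ β ∈ Fmin n w, ldvd n β α := by
  intro N
  induction N with
  | zero =>
    intro α hN hF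
    refine ⟨α, ⟨hF, fun b hb hba => ?_⟩, ldvd_refl α⟩
    obtain ⟨c, hc⟩ := hba
    have h1 := congrArg (len n) hc
    rw [len_mul] at h1
    have hlc : len n c = 0 := by omega
    rw [eq_one_of_len_zero hlc, mul_one] at hc
    exact hc
  | succ N ih =>
    intro α hN hF
    by_cases hmin : ∀ b ∈ Fset n w, ldvd n b α → b = α
    · exact ⟨α, ⟨hF, hmin⟩, ldvd_refl α⟩
    · push_neg at hmin
      obtain ⟨b, hb, hba, hne⟩ := hmin
      have hlt : len n b < len n α := by
        obtain ⟨c, hc⟩ := hba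
        have h1 := congrArg (len n) hc
        rw [len_mul] at h1
        rcases Nat.eq_zero_or_pos (len n c) with h0 | h0
        · exact absurd (by rw [eq_one_of_len_zero h0, mul_one] at hc; exact hc) hne
        · omega
      obtain ⟨β, hβ, hβb⟩ := ih b (by omega) hb
      exact ⟨β, hβ, ldvd_trans hβb hba⟩

/-- The recursive step for forbidden prefixes. -/
lemma fset_step {v : Word n} {jF : Ltr n} (hw : v * FreeMonoid.of jF ∈ Ln n) (α : PB n) :
    α ∈ Fset n (v * FreeMonoid.of jF) ↔
      (∃ i : Ltr n, i < jF ∧ ldvd n (g n i) (g n jF * α)) ∨ g n jF * α ∈ Fset n v := by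
  have hv : v ∈ Ln n := Ln_of_mul_right hw
  rw [mem_Fset_iff hw, mem_Fset_iff hv]
  have htl : FreeMonoid.toList (v * FreeMonoid.of jF) = FreeMonoid.toList v ++ [jF] := rfl
  constructor
  · rintro ⟨p, a, t, h1, i, hia, hdvd⟩
    rw [htl] at h1
    rcases append_split h1 with ⟨p', hp, hr⟩ | ⟨t', hv1, ht⟩
    · cases p' with
      | cons x xs =>
        exfalso
        simp only [List.cons_append, List.cons.injEq] at hr
        exact absurd hr.2.symm (by simp)
      | nil =>
        simp only [List.nil_append, List.cons.injEq] at hr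
        obtain ⟨rfl, rfl⟩ := hr
        left
        refine ⟨i, hia, ?_⟩
        rwa [prl_singleton] at hdvd
    · right
      refine ⟨p, a, t', hv1, i, hia, ?_⟩
      rw [ht] at hdvd
      rwa [show (a :: (t' ++ [jF])) = (a :: t') ++ [jF] from rfl, prl_append,
        prl_singleton, mul_assoc] at hdvd
  · rintro (⟨i, hij, hdvd⟩ | ⟨p, a, t, h1, i, hia, hdvd⟩)
    · refine ⟨FreeMonoid.toList v, jF, [], htl, i, hij, ?_⟩
      rwa [prl_singleton]
    · refine ⟨p, a, t ++ [jF], by rw [htl, h1]; simp, i, hia, ?_⟩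
      rw [show (a :: (t ++ [jF])) = (a :: t) ++ [jF] from rfl, prl_append,
        prl_singleton, mul_assoc]
      exact hdvd

lemma minimals_upcl (S : Set (PB n)) :
    minimals n {α | ∃ s ∈ S, ldvd n s α} = minimals n S := by
  ext x
  constructor
  · rintro ⟨⟨s, hs, hsx⟩, hminx⟩
    have hsx' : s = x := hminx s ⟨s, hs, ldvd_refl s⟩ hsx
    subst hsx'
    exact ⟨hs, fun b hb hbx => hminx b ⟨b, hb, ldvd_refl b⟩ hbx⟩
  · rintro ⟨hx, hminx⟩
    refine ⟨⟨x, hx, ldvd_refl x⟩, ?_⟩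
    rintro b ⟨s, hs, hsb⟩ hbx
    have hsx : s = x := hminx s hs (ldvd_trans hsb hbx)
    subst hsx
    exact (ldvd_antisymm hsb hbx).symm

/-- if `w = vσ_j ∈ L_n` then `v ∈ L_n` and `F_n^min(w)` is the set of
`≼`-minimal elements of `{σ_1,…,σ_(j-2), σ_(j-1)σ_j} ∪ {σ_j∖β : β ∈ F_n^min(v)}`. -/
theorem statement_3 (n : ℕ) (hn : 2 ≤ n) (v : Word n) (j : ℕ)
    (hj1 : 1 ≤ j) (hj2 : j ≤ n - 1) (hw : v * sigma n j ∈ Ln n) :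
    v ∈ Ln n ∧
    Fmin n (v * sigma n j) =
      minimals n
        (({x : PB n | ∃ i : ℕ, 1 ≤ i ∧ i ≤ j - 2 ∧ x = pr n (sigma n i)} ∪
         {x : PB n | 2 ≤ j ∧ x = pr n (sigma n (j - 1) * sigma n j)}) ∪
         {γ : PB n | ∃ β ∈ Fmin n v,
            IsLcm n {pr n (sigma n j), β} (pr n (sigma n j) * γ)}) := by
  have hjlt : j - 1 < n - 1 := by omega
  set jF : Ltr n := ⟨j - 1, hjlt⟩ with hjF
  have hsig : sigma n j = FreeMonoid.of jF := by rw [sigma_eq_of hj1 hj2]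
  have hprs : pr n (FreeMonoid.of jF) = g n jF := rfl
  have hjfv : (jF : ℕ) = j - 1 := rfl
  rw [hsig] at hw ⊢
  have hv : v ∈ Ln n := Ln_of_mul_right hw
  refine ⟨hv, ?_⟩
  have hset : Fset n (v * FreeMonoid.of jF) =
      {α | ∃ s ∈ (({x : PB n | ∃ i : ℕ, 1 ≤ i ∧ i ≤ j - 2 ∧ x = pr n (sigma n i)} ∪
         {x : PB n | 2 ≤ j ∧ x = pr n (sigma n (j - 1) * FreeMonoid.of jF)}) ∪
         {γ : PB n | ∃ β ∈ Fmin n v,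
            IsLcm n {pr n (FreeMonoid.of jF), β} (pr n (FreeMonoid.of jF) * γ)}),
        ldvd n s α} := by
    ext α
    rw [fset_step hw]
    constructor
    · rintro (⟨i, hij, hdvd⟩ | hmem)
      · have hij' : (i : ℕ) < (jF : ℕ) := hij
        obtain ⟨c1, hc1⟩ := hdvd
        rcases Nat.lt_or_ge (i.1 + 1) jF.1 with hfar | hadj
        · -- far i jF : contributes σ_{i+1} with i+1 ≤ j-2
          have hfij : far i jF := Or.inl (by omega)
          obtain ⟨c, -, hc2⟩ := (key_mon hc1).2.1 hfij
          refine ⟨g n i, ?_, ⟨c, hc2.symm⟩⟩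
          refine Set.mem_union_left _ (Set.mem_union_left _ ?_)
          exact ⟨i.1 + 1, by omega, by omega, (pr_sigma_eq_g i).symm⟩
        · -- adj : i.1 + 1 = jF.1
          have hadj' : adj i jF := Or.inl (by omega)
          obtain ⟨c, -, hc2⟩ := (key_mon hc1).2.2 hadj'
          refine ⟨g n i * g n jF, ?_, ⟨c, by rw [mul_assoc]; exact hc2.symm⟩⟩
          refine Set.mem_union_left _ (Set.mem_union_right _ ?_)
          refine ⟨by omega, ?_⟩
          rw [map_mul, hprs, sigma_eq_of (by omega) (by omega)]
          have hieq2 : i = (⟨j - 1 - 1, by omega⟩ : Ltr n) :=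
            Fin.ext (by show (i : ℕ) = j - 1 - 1; omega)
          exact congrArg (fun y => g n y * g n jF) hieq2
      · -- g jF α ∈ Fset v
        obtain ⟨β, hβ, hβle⟩ := Fmin_below (len n (g n jF * α)) _ le_rfl hmem
        obtain ⟨m, hm⟩ := lcm_exists (len n (g n jF * α)) (g n jF * α) β jF le_rfl
          ⟨α, rfl⟩ hβle
        have hjm : ldvd n (g n jF) m := hm.1 _ (Set.mem_insert _ _)
        obtain ⟨γ, rfl⟩ := hjm
        refine ⟨γ, Set.mem_union_right _ ⟨β, hβ, ?_⟩, ?_⟩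
        · rw [hprs]; exact hm
        · have hle : ldvd n (g n jF * γ) (g n jF * α) := by
            refine hm.2 _ ?_
            rintro y (rfl | hy)
            · exact ⟨α, rfl⟩
            · simp only [Set.mem_singleton_iff] at hy; rw [hy]; exact hβle
          exact ldvd_cancel hle
    · rintro ⟨s, hs, hsa⟩
      simp only [Set.mem_union, Set.mem_setOf_eq] at hs
      rcases hs with (⟨i', h1, h2, rfl⟩ | ⟨hj2', rfl⟩) | ⟨β, hβ, hlcm⟩
      · -- σ_{i'} with i' ≤ j - 2
        left
        have hilt : i' - 1 < n - 1 := by omega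
        have hpi : pr n (sigma n i') = g n (⟨i' - 1, hilt⟩ : Ltr n) := by
          rw [sigma_eq_of h1 (by omega)]; rfl
        rw [hpi] at hsa
        obtain ⟨c, hc⟩ := hsa
        have hfar : far (⟨i' - 1, hilt⟩ : Ltr n) jF := Or.inl (by show i' - 1 + 2 ≤ j - 1; omega)
        refine ⟨⟨i' - 1, hilt⟩, by show i' - 1 < j - 1; omega, ⟨g n jF * c, ?_⟩⟩
        rw [← hc]
        calc g n (⟨i' - 1, hilt⟩ : Ltr n) * (g n jF * c)
            = (g n (⟨i' - 1, hilt⟩ : Ltr n) * g n jF) * c := (mul_assoc _ _ _).symm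
          _ = (g n jF * g n (⟨i' - 1, hilt⟩ : Ltr n)) * c := by rw [g_braid_far hfar]
          _ = g n jF * (g n (⟨i' - 1, hilt⟩ : Ltr n) * c) := mul_assoc _ _ _
      · -- σ_{j-1} σ_j
        left
        have hilt : j - 2 < n - 1 := by omega
        have hpi : pr n (sigma n (j - 1) * FreeMonoid.of jF) =
            g n (⟨j - 2, hilt⟩ : Ltr n) * g n jF := by
          rw [map_mul, hprs, sigma_eq_of (by omega) (by omega)]; rfl
        rw [hpi] at hsa
        obtain ⟨c, hc⟩ := hsa
        have hadj : adj (⟨j - 2, hilt⟩ : Ltr n) jF := Or.inl (by show j - 2 + 1 = j - 1; omega)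
        refine ⟨⟨j - 2, hilt⟩, by show j - 2 < j - 1; omega, ⟨(g n jF * g n (⟨j - 2, hilt⟩ : Ltr n)) * c, ?_⟩⟩
        rw [← hc]
        calc g n (⟨j - 2, hilt⟩ : Ltr n) * ((g n jF * g n (⟨j - 2, hilt⟩ : Ltr n)) * c)
            = (g n (⟨j - 2, hilt⟩ : Ltr n) * (g n jF * g n (⟨j - 2, hilt⟩ : Ltr n))) * c :=
              (mul_assoc _ _ _).symm
          _ = (g n jF * (g n (⟨j - 2, hilt⟩ : Ltr n) * g n jF)) * c := by
              rw [g_braid_adj hadj]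
          _ = g n jF * ((g n (⟨j - 2, hilt⟩ : Ltr n) * g n jF) * c) := mul_assoc _ _ _
      · -- lcm complement
        right
        rw [hprs] at hlcm
        have hβdvd : ldvd n β (g n jF * α) :=
          ldvd_trans (hlcm.1 β (by simp)) (ldvd_mul_left _ hsa)
        exact Fset_upward hv hβ.1 hβdvd
  show minimals n (Fset n (v * FreeMonoid.of jF)) = _
  rw [hset, minimals_upcl]

end BraidPaper
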